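/- arXiv:1101.2934 — 2 statements merged into one kernel-verified Lean document; each statement's English description precedes it below -/
import Mathlib

section
/- For all t ∈ [0, 2/5], 1 + 3t + √(6t − 15t²) ≤ (8 + 2√6)/5, and the maximum value (8+2√6)/5 of g(t)=1+3t+√(6t−15t²) on [0, 2/5] is attained at t = (4+√6)/20; moreover (8 + 2√6)/5 < 2.58. -/
theorem four_equal_tiles_bound :
    (∀ t : ℝ, 0 ≤ t → t ≤ 2/5 →
      1 + 3 * t + Real.sqrt (6 * t - 15 * t ^ 2) ≤ (8 + 2 * Real.sqrt 6) / 5) ∧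
    (1 + 3 * ((4 + Real.sqrt 6) / 20) +
      Real.sqrt (6 * ((4 + Real.sqrt 6) / 20) - 15 * ((4 + Real.sqrt 6) / 20) ^ 2)
        = (8 + 2 * Real.sqrt 6) / 5) ∧
    (8 + 2 * Real.sqrt 6) / 5 < 2.58 := by
  have hs : Real.sqrt 6 ^ 2 = 6 := Real.sq_sqrt (by norm_num)
  have hs2 : (2:ℝ) ≤ Real.sqrt 6 := by
    nlinarith [Real.sqrt_nonneg 6]
  have hs3 : Real.sqrt 6 < 2.45 := by
    nlinarith [Real.sqrt_nonneg 6]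
  refine ⟨fun t ht ht2 => ?_, ?_, by nlinarith⟩
  · have hnn : 0 ≤ (3 + 2 * Real.sqrt 6) / 5 - 3 * t := by nlinarith
    have h1 : Real.sqrt (6 * t - 15 * t ^ 2) ≤ (3 + 2 * Real.sqrt 6) / 5 - 3 * t := by
      rw [show (3 + 2 * Real.sqrt 6) / 5 - 3 * t
          = Real.sqrt (((3 + 2 * Real.sqrt 6) / 5 - 3 * t) ^ 2) from
        (Real.sqrt_sq hnn).symm]
      apply Real.sqrt_le_sqrt
      nlinarith [sq_nonneg (t - (4 + Real.sqrt 6) / 20)]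
    linarith
  · have harg : 6 * ((4 + Real.sqrt 6) / 20) - 15 * ((4 + Real.sqrt 6) / 20) ^ 2
        = (Real.sqrt 6 / 4) ^ 2 := by nlinarith
    rw [harg, Real.sqrt_sq (by positivity)]
    ring
end

section
/- Suppose nonnegative reals satisfy: a tiling of the unit square by 8 squares contains squares of sides 1−t, t, t, t (with 2/5 ≤ t < 1/2) and the remaining 4 squares have total area 2t − 4t². Then the total side length of all 8 squares is at most (1−t) + 3t + √(4(2t−4t²)) ≤ 13/5. -/
theorem combined_bound (t : ℝ) (h0 : 2/5 ≤ t) (h1 : t < 1/2)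
    (s : Fin 4 → ℝ) (hs : ∀ i, 0 ≤ s i)
    (harea : ∑ i, s i ^ 2 = 2 * t - 4 * t ^ 2) :
    (1 - t) + 3 * t + ∑ i, s i ≤ (1 - t) + 3 * t + Real.sqrt (4 * (2 * t - 4 * t ^ 2)) ∧
    (1 - t) + 3 * t + Real.sqrt (4 * (2 * t - 4 * t ^ 2)) ≤ 13/5 := by
  constructor
  · have hsum : (0:ℝ) ≤ ∑ i, s i := Finset.sum_nonneg fun i _ => hs i
    have hcs : (∑ i, s i) ^ 2 ≤ 4 * (2 * t - 4 * t ^ 2) := by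
      rw [← harea]
      simp [Fin.sum_univ_four]
      nlinarith [sq_nonneg (s 0 - s 1), sq_nonneg (s 0 - s 2), sq_nonneg (s 0 - s 3),
        sq_nonneg (s 1 - s 2), sq_nonneg (s 1 - s 3), sq_nonneg (s 2 - s 3)]
    have := Real.sqrt_le_sqrt hcs
    rw [Real.sqrt_sq hsum] at this
    linarith
  · have h2 : Real.sqrt (4 * (2 * t - 4 * t ^ 2)) ≤ 8/5 - 2*t := by
      have hle : 4 * (2 * t - 4 * t ^ 2) ≤ (8/5 - 2*t)^2 := by nlinarith
      have := Real.sqrt_le_sqrt hle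
      rwa [Real.sqrt_sq (by linarith)] at this
    linarith
end
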